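/- Let n be a positive integer, let 0 < c ≤ A, let d be a positive integer, and let v = (v₁, …, v_d) ∈ [-c, c]^d. Apply the stochastic n-bit quantization mechanism independently to each coordinate: for each j, with u = 2^n - 1 and p_j = (A + v_j)/(2A), draw K_j ~ Binomial(u, p_j) independently and output M(v)_j = ((2K_j - u)/u) · A. Then M(v) is an unbiased estimator of v and the total variance satisfies Σ_{j=1}^d Var[M(v)_j] = (dA² - ‖v‖₂²)/(2^n - 1), where ‖v‖₂² = Σ_j v_j². -/

import Mathlib

open MeasureTheory
open scoped ENNReal NNReal

lemma binom_sum_one (u : ℕ) (p : ℝ) :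
    ∑ k ∈ Finset.range (u + 1), (u.choose k : ℝ) * p ^ k * (1 - p) ^ (u - k) = 1 := by
  calc ∑ k ∈ Finset.range (u + 1), (u.choose k : ℝ) * p ^ k * (1 - p) ^ (u - k)
      = ∑ k ∈ Finset.range (u + 1), p ^ k * (1 - p) ^ (u - k) * (u.choose k : ℝ) :=
        Finset.sum_congr rfl fun k _ => by ring
    _ = (p + (1 - p)) ^ u := (add_pow p (1 - p) u).symm
    _ = 1 := by simp

lemma binom_sum_aux (m : ℕ) (p q : ℝ) :
    ∑ i ∈ Finset.range (m + 1), (m.choose i : ℝ) * p ^ i * q ^ (m - i) = (p + q) ^ m := by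
  rw [add_pow]
  exact Finset.sum_congr rfl fun k _ => by ring

lemma binom_sum_mul (u : ℕ) (p q : ℝ) :
    ∑ k ∈ Finset.range (u + 1), (k : ℝ) * (u.choose k : ℝ) * p ^ k * q ^ (u - k)
      = u * p * (p + q) ^ (u - 1) := by
  cases u with
  | zero => simp
  | succ m =>
    rw [Finset.sum_range_succ']
    simp only [Nat.cast_zero, zero_mul, Nat.choose_zero_right, add_zero]
    have key : ∀ k : ℕ, ((k : ℝ) + 1) * ((m + 1).choose (k + 1) : ℝ)
        = (m + 1) * (m.choose k : ℝ) := by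
      intro k
      have h2 : ((Nat.succ m * Nat.choose m k : ℕ) : ℝ)
          = ((Nat.choose (Nat.succ m) (Nat.succ k) * Nat.succ k : ℕ) : ℝ) := by
        rw [Nat.add_one_mul_choose_eq m k]
      push_cast at h2
      linarith
    have h : ∀ k ∈ Finset.range (m + 1),
        ((k : ℝ) + 1) * ((m + 1).choose (k + 1) : ℝ) * p ^ (k + 1) * q ^ (m + 1 - (k + 1))
          = ((m : ℝ) + 1) * p * ((m.choose k : ℝ) * p ^ k * q ^ (m - k)) := by
      intro k _
      rw [Nat.succ_sub_succ, key k, pow_succ]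
      ring
    calc ∑ k ∈ Finset.range (m + 1),
          ((k + 1 : ℕ) : ℝ) * ((m + 1).choose (k + 1) : ℝ) * p ^ (k + 1) * q ^ (m + 1 - (k + 1))
        = ∑ k ∈ Finset.range (m + 1),
            ((m : ℝ) + 1) * p * ((m.choose k : ℝ) * p ^ k * q ^ (m - k)) := by
          refine Finset.sum_congr rfl fun k hk => ?_
          rw [← h k hk]; push_cast; ring
      _ = ((m : ℝ) + 1) * p * (p + q) ^ m := by
          rw [← Finset.mul_sum, binom_sum_aux]
      _ = ((m + 1 : ℕ) : ℝ) * p * (p + q) ^ (m + 1 - 1) := by push_cast; ring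

lemma binom_sum_sq (u : ℕ) (p q : ℝ) :
    ∑ k ∈ Finset.range (u + 1), (k : ℝ) * ((k : ℝ) - 1) * (u.choose k : ℝ) * p ^ k * q ^ (u - k)
      = u * ((u : ℝ) - 1) * p ^ 2 * (p + q) ^ (u - 2) := by
  match u with
  | 0 => simp
  | 1 =>
    rw [Finset.sum_range_succ, Finset.sum_range_one]
    norm_num
  | (m + 2) =>
    rw [Finset.sum_range_succ']
    simp only [Nat.cast_zero, zero_mul, add_zero]
    have key : ∀ k : ℕ, ((k : ℝ) + 1) * ((m + 2).choose (k + 1) : ℝ)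
        = (m + 2) * ((m + 1).choose k : ℝ) := by
      intro k
      have h2 : ((Nat.succ (m + 1) * Nat.choose (m + 1) k : ℕ) : ℝ)
          = ((Nat.choose (Nat.succ (m + 1)) (Nat.succ k) * Nat.succ k : ℕ) : ℝ) := by
        rw [Nat.add_one_mul_choose_eq (m + 1) k]
      push_cast at h2
      linarith
    calc ∑ k ∈ Finset.range (m + 2),
          ((k + 1 : ℕ) : ℝ) * (((k + 1 : ℕ) : ℝ) - 1) * ((m + 2).choose (k + 1) : ℝ)
            * p ^ (k + 1) * q ^ (m + 2 - (k + 1))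
        = ∑ k ∈ Finset.range (m + 2),
            ((m : ℝ) + 2) * p * ((k : ℝ) * ((m + 1).choose k : ℝ) * p ^ k * q ^ ((m + 1) - k)) := by
          refine Finset.sum_congr rfl fun k hk => ?_
          have hk1 : ((k : ℝ) + 1) * ((m + 2).choose (k + 1) : ℝ) = (m + 2) * ((m + 1).choose k : ℝ) :=
            key k
          push_cast
          rw [pow_succ]
          calc ((k : ℝ) + 1) * ((k : ℝ) + 1 - 1) * ((m + 2).choose (k + 1) : ℝ) * (p ^ k * p)
                * q ^ (m + 1 - k)
              = (((k : ℝ) + 1) * ((m + 2).choose (k + 1) : ℝ)) * (k : ℝ) * (p ^ k * p)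
                * q ^ (m + 1 - k) := by ring
            _ = ((m : ℝ) + 2) * p * ((k : ℝ) * ((m + 1).choose k : ℝ) * p ^ k * q ^ (m + 1 - k)) := by
                rw [hk1]; ring
      _ = ((m : ℝ) + 2) * p * (((m + 1 : ℕ) : ℝ) * p * (p + q) ^ ((m + 1) - 1)) := by
          rw [← Finset.mul_sum, binom_sum_mul (m + 1) p q]
      _ = ((m + 2 : ℕ) : ℝ) * (((m + 2 : ℕ) : ℝ) - 1) * p ^ 2 * (p + q) ^ (m + 2 - 2) := by
          push_cast; ring_nf

/-- The law of the stochastic `n`-bit quantizer output `((2K - u)/u) · A`, where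
`K ~ Binomial(u, (A + v)/(2A))`. -/
noncomputable def quantLaw (A v : ℝ) (u : ℕ) : Measure ℝ :=
  ∑ k ∈ Finset.range (u + 1),
    (((u.choose k : ℝ) * ((A + v) / (2 * A)) ^ k *
        (1 - (A + v) / (2 * A)) ^ (u - k)).toNNReal) •
      Measure.dirac ((2 * (k : ℝ) - (u : ℝ)) / (u : ℝ) * A)


section quant

variable {A v : ℝ} {u : ℕ}

lemma quant_p_nonneg (hA : 0 < A) (hv : v ∈ Set.Icc (-A) A) : 0 ≤ (A + v) / (2 * A) :=
  div_nonneg (by linarith [hv.1]) (by linarith)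

lemma quant_q_nonneg (hA : 0 < A) (hv : v ∈ Set.Icc (-A) A) : 0 ≤ 1 - (A + v) / (2 * A) := by
  have : (A + v) / (2 * A) ≤ 1 := by
    rw [div_le_one (by linarith)]; linarith [hv.2]
  linarith

lemma quant_w_nonneg (hA : 0 < A) (hv : v ∈ Set.Icc (-A) A) (k : ℕ) :
    0 ≤ (u.choose k : ℝ) * ((A + v) / (2 * A)) ^ k * (1 - (A + v) / (2 * A)) ^ (u - k) :=
  mul_nonneg (mul_nonneg (Nat.cast_nonneg _) (pow_nonneg (quant_p_nonneg hA hv) _))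
    (pow_nonneg (quant_q_nonneg hA hv) _)

lemma integrable_nnsmul_dirac {f : ℝ → ℝ} (hf : StronglyMeasurable f) (c : ℝ≥0) (a : ℝ) :
    Integrable f (c • Measure.dirac a) := by
  rw [show (c • Measure.dirac a : Measure ℝ) = ((c : ℝ≥0∞) • Measure.dirac a) from rfl]
  exact ((integrable_const (f a)).congr (ae_eq_dirac f).symm).smul_measure ENNReal.coe_ne_top

lemma quantLaw_integral (hA : 0 < A) (hv : v ∈ Set.Icc (-A) A)
    (f : ℝ → ℝ) (hf : StronglyMeasurable f) :
    ∫ x, f x ∂(quantLaw A v u)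
      = ∑ k ∈ Finset.range (u + 1),
          ((u.choose k : ℝ) * ((A + v) / (2 * A)) ^ k * (1 - (A + v) / (2 * A)) ^ (u - k)) *
            f ((2 * (k : ℝ) - (u : ℝ)) / (u : ℝ) * A) := by
  have hw := quant_w_nonneg (u := u) hA hv
  unfold quantLaw
  rw [integral_finset_sum_measure (fun k _ => integrable_nnsmul_dirac hf _ _)]
  refine Finset.sum_congr rfl fun k _ => ?_
  rw [integral_smul_nnreal_measure, integral_dirac' f _ hf]
  rw [NNReal.smul_def, Real.coe_toNNReal _ (hw k), smul_eq_mul]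

lemma quantLaw_isProb (hA : 0 < A) (hv : v ∈ Set.Icc (-A) A) :
    IsProbabilityMeasure (quantLaw A v u) := by
  have hw := quant_w_nonneg (u := u) hA hv
  constructor
  unfold quantLaw
  rw [Measure.finset_sum_apply]
  have : ∀ k ∈ Finset.range (u + 1),
      ((((u.choose k : ℝ) * ((A + v) / (2 * A)) ^ k *
        (1 - (A + v) / (2 * A)) ^ (u - k)).toNNReal) •
        Measure.dirac ((2 * (k : ℝ) - (u : ℝ)) / (u : ℝ) * A)) Set.univ
      = ENNReal.ofReal ((u.choose k : ℝ) * ((A + v) / (2 * A)) ^ k *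
          (1 - (A + v) / (2 * A)) ^ (u - k)) := by
    intro k _
    rw [Measure.smul_apply, measure_univ, ENNReal.smul_def, smul_eq_mul, mul_one]; rfl
  rw [Finset.sum_congr rfl this, ← ENNReal.ofReal_sum_of_nonneg (fun k _ => hw k),
    binom_sum_one, ENNReal.ofReal_one]

lemma quantLaw_mean (hA : 0 < A) (hv : v ∈ Set.Icc (-A) A) (hu : u ≠ 0) :
    ∫ x, x ∂(quantLaw A v u) = v := by
  have huR : (u : ℝ) ≠ 0 := Nat.cast_ne_zero.2 hu
  have hAne : A ≠ 0 := ne_of_gt hA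
  show ∫ x, id x ∂(quantLaw A v u) = v
  rw [quantLaw_integral hA hv _ (continuous_id.stronglyMeasurable)]
  calc ∑ k ∈ Finset.range (u + 1),
        ((u.choose k : ℝ) * ((A + v) / (2 * A)) ^ k * (1 - (A + v) / (2 * A)) ^ (u - k)) *
          id ((2 * (k : ℝ) - (u : ℝ)) / (u : ℝ) * A)
      = ∑ k ∈ Finset.range (u + 1),
          ((2 * A / u) * ((k : ℝ) * (u.choose k : ℝ) * ((A + v) / (2 * A)) ^ k *
              (1 - (A + v) / (2 * A)) ^ (u - k))
            - A * ((u.choose k : ℝ) * ((A + v) / (2 * A)) ^ k *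
              (1 - (A + v) / (2 * A)) ^ (u - k))) := by
        refine Finset.sum_congr rfl fun k _ => ?_
        simp only [id_eq]
        field_simp
    _ = (2 * A / u) * ((u : ℝ) * ((A + v) / (2 * A)) *
          ((A + v) / (2 * A) + (1 - (A + v) / (2 * A))) ^ (u - 1)) - A * 1 := by
        rw [Finset.sum_sub_distrib, ← Finset.mul_sum, ← Finset.mul_sum,
          binom_sum_mul, binom_sum_one]
    _ = v := by
        rw [show (A + v) / (2 * A) + (1 - (A + v) / (2 * A)) = 1 from by ring, one_pow]
        field_simp
        ring

lemma quantLaw_sq (hA : 0 < A) (hv : v ∈ Set.Icc (-A) A) (hu : u ≠ 0) :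
    ∫ x, x ^ 2 ∂(quantLaw A v u) = (A ^ 2 - v ^ 2) / u + v ^ 2 := by
  have huR : (u : ℝ) ≠ 0 := Nat.cast_ne_zero.2 hu
  have hu1 : 1 ≤ (u : ℝ) := by exact_mod_cast Nat.one_le_iff_ne_zero.2 hu
  have hAne : A ≠ 0 := ne_of_gt hA
  rw [quantLaw_integral hA hv _ ((continuous_pow 2).stronglyMeasurable)]
  calc ∑ k ∈ Finset.range (u + 1),
        ((u.choose k : ℝ) * ((A + v) / (2 * A)) ^ k * (1 - (A + v) / (2 * A)) ^ (u - k)) *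
          ((2 * (k : ℝ) - (u : ℝ)) / (u : ℝ) * A) ^ 2
      = ∑ k ∈ Finset.range (u + 1),
          ((4 * A ^ 2 / (u : ℝ) ^ 2) * ((k : ℝ) * ((k : ℝ) - 1) * (u.choose k : ℝ) *
              ((A + v) / (2 * A)) ^ k * (1 - (A + v) / (2 * A)) ^ (u - k))
            + (4 * A ^ 2 / (u : ℝ) ^ 2 - 4 * A ^ 2 / (u : ℝ)) * ((k : ℝ) * (u.choose k : ℝ) *
              ((A + v) / (2 * A)) ^ k * (1 - (A + v) / (2 * A)) ^ (u - k))
            + A ^ 2 * ((u.choose k : ℝ) * ((A + v) / (2 * A)) ^ k *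
              (1 - (A + v) / (2 * A)) ^ (u - k))) := by
        refine Finset.sum_congr rfl fun k _ => ?_
        field_simp
        ring
    _ = (4 * A ^ 2 / (u : ℝ) ^ 2) * ((u : ℝ) * ((u : ℝ) - 1) * ((A + v) / (2 * A)) ^ 2 *
          ((A + v) / (2 * A) + (1 - (A + v) / (2 * A))) ^ (u - 2))
        + (4 * A ^ 2 / (u : ℝ) ^ 2 - 4 * A ^ 2 / (u : ℝ)) * ((u : ℝ) * ((A + v) / (2 * A)) *
          ((A + v) / (2 * A) + (1 - (A + v) / (2 * A))) ^ (u - 1))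
        + A ^ 2 * 1 := by
        rw [Finset.sum_add_distrib, Finset.sum_add_distrib, ← Finset.mul_sum, ← Finset.mul_sum,
          ← Finset.mul_sum, binom_sum_sq, binom_sum_mul, binom_sum_one]
    _ = (A ^ 2 - v ^ 2) / u + v ^ 2 := by
        rw [show (A + v) / (2 * A) + (1 - (A + v) / (2 * A)) = 1 from by ring, one_pow, one_pow]
        field_simp
        ring

lemma quantLaw_ae_bound (hA : 0 < A) (hv : v ∈ Set.Icc (-A) A) (hu : u ≠ 0) :
    ∀ᵐ x ∂(quantLaw A v u), ‖x‖ ≤ A := by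
  have huR : (0 : ℝ) < (u : ℝ) := by exact_mod_cast Nat.pos_of_ne_zero hu
  rw [ae_iff]
  unfold quantLaw
  rw [Measure.finset_sum_apply]
  refine Finset.sum_eq_zero fun k hk => ?_
  have hk' : (k : ℝ) ≤ (u : ℝ) := by
    exact_mod_cast Nat.lt_succ_iff.1 (Finset.mem_range.1 hk)
  have hk0 : (0 : ℝ) ≤ (k : ℝ) := Nat.cast_nonneg k
  have hmem : ‖(2 * (k : ℝ) - (u : ℝ)) / (u : ℝ) * A‖ ≤ A := by
    rw [Real.norm_eq_abs, abs_mul, abs_div, abs_of_pos hA, abs_of_pos huR]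
    have h1 : |2 * (k : ℝ) - (u : ℝ)| ≤ (u : ℝ) := abs_le.2 ⟨by linarith, by linarith⟩
    have h2 : |2 * (k : ℝ) - (u : ℝ)| / (u : ℝ) ≤ 1 := (div_le_one huR).2 h1
    nlinarith [abs_nonneg (2 * (k : ℝ) - (u : ℝ))]
  have hms : MeasurableSet {a : ℝ | ¬ ‖a‖ ≤ A} := by
    exact
      (isClosed_le continuous_norm continuous_const).measurableSet.compl
  rw [Measure.smul_apply, Measure.dirac_apply' _ hms]
  rw [Set.indicator_of_notMem (by simp only [Set.mem_setOf_eq, not_not]; exact hmem)]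
  simp

lemma quantLaw_variance (hA : 0 < A) (hv : v ∈ Set.Icc (-A) A) (hu : u ≠ 0) :
    ProbabilityTheory.variance id (quantLaw A v u) = (A ^ 2 - v ^ 2) / u := by
  haveI : IsProbabilityMeasure (quantLaw A v u) := quantLaw_isProb hA hv
  have hmem : MemLp (id : ℝ → ℝ) 2 (quantLaw A v u) :=
    MemLp.of_bound aestronglyMeasurable_id A (quantLaw_ae_bound hA hv hu)
  rw [ProbabilityTheory.variance_eq_sub hmem]
  have h1 : ∫ x, (id ^ 2) x ∂(quantLaw A v u) = ∫ x, x ^ 2 ∂(quantLaw A v u) := by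
    simp only [Pi.pow_apply, id_eq]
  have h2 : ∫ x, id x ∂(quantLaw A v u) = ∫ x, x ∂(quantLaw A v u) := rfl
  rw [h1, h2, quantLaw_sq hA hv hu, quantLaw_mean hA hv hu]
  ring

end quant
/-- Coordinate-wise stochastic `n`-bit quantization of a vector `v ∈ [-c, c]^d` is unbiased,
and its total variance is `(dA² - ‖v‖₂²)/(2ⁿ - 1)`. -/
theorem stochastic_quantizer_vector_unbiased_variance (n d : ℕ) (hn : 0 < n) (hd : 0 < d)
    (A c : ℝ) (hc : 0 < c) (hcA : c ≤ A) (v : Fin d → ℝ)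
    (hv : ∀ j, v j ∈ Set.Icc (-c) c) :
    (∀ j, ∫ x, x ∂(quantLaw A (v j) (2 ^ n - 1)) = v j) ∧
      ∑ j, ProbabilityTheory.variance id (quantLaw A (v j) (2 ^ n - 1)) =
        ((d : ℝ) * A ^ 2 - ∑ j, (v j) ^ 2) / ((2 : ℝ) ^ n - 1) := by
  have hA : 0 < A := lt_of_lt_of_le hc hcA
  have hvA : ∀ j, v j ∈ Set.Icc (-A) A := fun j =>
    ⟨by linarith [(hv j).1], le_trans (hv j).2 hcA⟩
  have h2n : 2 ≤ 2 ^ n := by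
    calc 2 = 2 ^ 1 := (pow_one 2).symm
    _ ≤ 2 ^ n := Nat.pow_le_pow_right (by norm_num) hn
  have hu : (2 ^ n - 1 : ℕ) ≠ 0 := by omega
  have hcast : ((2 ^ n - 1 : ℕ) : ℝ) = (2 : ℝ) ^ n - 1 := by
    rw [Nat.cast_sub (by omega)]
    push_cast
    ring
  refine ⟨fun j => quantLaw_mean hA (hvA j) hu, ?_⟩
  rw [Finset.sum_congr rfl (fun j _ => quantLaw_variance hA (hvA j) hu)]
  rw [hcast, ← Finset.sum_div, Finset.sum_sub_distrib, Finset.sum_const, Finset.card_univ,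
    Fintype.card_fin, nsmul_eq_mul]
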